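/- Let λ > 0 and μ ∈ ℝ. Define z : ℝ × [0,∞) → ℝ by z(x,t) = (cosh(t√(2λ)))^{−1/2} · exp( −(√λ/√2) · tanh(t√(2λ)) · (x + μ/2)² + λμ²t/4 ). Then z(x,0) = 1 for all x ∈ ℝ; z satisfies ∂z/∂t (x,t) = ½ ∂²z/∂x² (x,t) − λ(x² + μx) z(x,t) for all x ∈ ℝ and t ≥ 0; and for each T > 0 the function z is bounded on ℝ × [0,T]. -/

import Mathlib

open Real

private lemma aux_x (C b c m x : ℝ) :
    HasDerivAt (fun y : ℝ => C * Real.exp (-b * (y + m)^2 + c))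
      (C * Real.exp (-b * (x + m)^2 + c) * (-b * (2 * (x + m)))) x := by
  have h0 : HasDerivAt (fun y : ℝ => y + m) 1 x := (hasDerivAt_id x).add_const m
  have h1 : HasDerivAt (fun y : ℝ => (y + m)^2) (2 * (x + m)) x := by
    simpa using h0.fun_pow 2
  have h2 : HasDerivAt (fun y : ℝ => -b * (y + m)^2 + c) (-b * (2 * (x + m))) x :=
    (h1.const_mul (-b)).add_const c
  have h3 := (h2.exp).const_mul C
  convert h3 using 1
  · rfl
  · rfl
  ring

private lemma aux_xx (C b c m x : ℝ) :
    deriv (deriv (fun y : ℝ => C * Real.exp (-b * (y + m)^2 + c))) x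
      = C * Real.exp (-b * (x + m)^2 + c) * (4 * b^2 * (x + m)^2 - 2 * b) := by
  have hd : deriv (fun y : ℝ => C * Real.exp (-b * (y + m)^2 + c))
      = fun y => C * Real.exp (-b * (y + m)^2 + c) * (-b * (2 * (y + m))) :=
    funext fun y => (aux_x C b c m y).deriv
  rw [hd]
  have hlin : HasDerivAt (fun y : ℝ => -b * (2 * (y + m))) (-b * 2) x := by
    have h0 : HasDerivAt (fun y : ℝ => y + m) 1 x := (hasDerivAt_id x).add_const m
    simpa [mul_assoc] using (h0.const_mul 2).const_mul (-b)
  have h2 := (aux_x C b c m x).fun_mul hlin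
  rw [h2.deriv]
  ring

theorem stmt_8 (lam mu : ℝ) (hlam : 0 < lam)
    (z : ℝ → ℝ → ℝ)
    (hz : ∀ x t, z x t
      = (Real.cosh (t * Real.sqrt (2 * lam))) ^ (-(1:ℝ)/2) *
        Real.exp (-(Real.sqrt lam / Real.sqrt 2)
            * Real.tanh (t * Real.sqrt (2 * lam)) * (x + mu/2)^2
          + lam * mu^2 * t / 4)) :
    (∀ x, z x 0 = 1) ∧
    (∀ x t : ℝ, 0 ≤ t →
      deriv (fun s => z x s) t
        = (1/2) * iteratedDeriv 2 (fun y => z y t) x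
          - lam * (x^2 + mu * x) * z x t) ∧
    (∀ T : ℝ, 0 < T → ∃ C : ℝ, ∀ x t : ℝ, 0 ≤ t → t ≤ T → |z x t| ≤ C) := by
  set a := Real.sqrt (2 * lam) with ha_def
  set k := Real.sqrt lam / Real.sqrt 2 with hk_def
  have h2 : Real.sqrt 2 * Real.sqrt 2 = 2 := Real.mul_self_sqrt (by norm_num)
  have hs2 : (0:ℝ) < Real.sqrt 2 := Real.sqrt_pos.mpr (by norm_num)
  have hka : a = 2 * k := by
    rw [ha_def, hk_def, Real.sqrt_mul (by norm_num : (0:ℝ) ≤ 2) lam]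
    field_simp
    linear_combination h2
  have hk0 : 0 ≤ k := div_nonneg (Real.sqrt_nonneg _) hs2.le
  have hlamk : lam = 2 * k^2 := by
    rw [hk_def, div_pow, Real.sq_sqrt hlam.le, Real.sq_sqrt (by norm_num : (0:ℝ) ≤ 2)]
    ring
  refine ⟨?_, ?_, ?_⟩
  · intro x
    rw [hz]
    simp
  · intro x t _
    set ch := Real.cosh (t * a) with hch_def
    set sh := Real.sinh (t * a) with hsh_def
    set T := Real.tanh (t * a) with hT_def
    have hchpos : 0 < ch := Real.cosh_pos _
    have hT : T = sh / ch := Real.tanh_eq_sinh_div_cosh _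
    have hsq : ch^2 - sh^2 = 1 := Real.cosh_sq_sub_sinh_sq _
    -- the space function
    have hzx : (fun y => z y t)
        = (fun y => (ch ^ (-(1:ℝ)/2)) * Real.exp (-(k * T) * (y + mu/2)^2 + lam * mu^2 * t / 4)) := by
      funext y
      rw [hz, show -k * T * (y + mu/2)^2 + lam * mu^2 * t / 4
        = -(k * T) * (y + mu/2)^2 + lam * mu^2 * t / 4 from by ring]
    -- the time function
    have hzt : (fun s => z x s)
        = (fun s => Real.cosh (s * a) ^ (-(1:ℝ)/2) *
            Real.exp (-(k * Real.tanh (s * a)) * (x + mu/2)^2 + lam * mu^2 * s / 4)) := by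
      funext s
      rw [hz, show -k * Real.tanh (s * a) * (x + mu/2)^2 + lam * mu^2 * s / 4
        = -(k * Real.tanh (s * a)) * (x + mu/2)^2 + lam * mu^2 * s / 4 from by ring]
    -- time derivative
    have hta : HasDerivAt (fun s : ℝ => s * a) a t := by
      simpa using (hasDerivAt_id t).mul_const a
    have hchd : HasDerivAt (fun s : ℝ => Real.cosh (s * a)) (sh * a) t :=
      by have := (Real.hasDerivAt_cosh (t * a)).comp t hta; exact this
    have hP : HasDerivAt (fun s : ℝ => Real.cosh (s * a) ^ (-(1:ℝ)/2))
        ((sh * a) * (-(1:ℝ)/2) * ch ^ ((-(1:ℝ)/2) - 1)) t :=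
      hchd.rpow_const (Or.inl hchpos.ne')
    have htanh0 : HasDerivAt Real.tanh (1 - T^2) (t * a) := by
      have hdiv := (Real.hasDerivAt_sinh (t * a)).div (Real.hasDerivAt_cosh (t * a)) hchpos.ne'
      have hfun : Real.tanh = fun y => Real.sinh y / Real.cosh y :=
        funext Real.tanh_eq_sinh_div_cosh
      have hval : (Real.cosh (t*a) * Real.cosh (t*a) - Real.sinh (t*a) * Real.sinh (t*a)) /
          Real.cosh (t*a) ^ 2 = 1 - T^2 := by
        rw [hT]
        field_simp
        ring
      rw [hfun]
      rw [← hval]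
      exact hdiv
    have htanh : HasDerivAt (fun s : ℝ => Real.tanh (s * a)) ((1 - T^2) * a) t :=
      by have := htanh0.comp t hta; exact this
    have hE : HasDerivAt (fun s : ℝ => -(k * Real.tanh (s * a)) * (x + mu/2)^2 + lam * mu^2 * s / 4)
        (-(k * ((1 - T^2) * a)) * (x + mu/2)^2 + lam * mu^2 / 4) t := by
      have h1 := ((htanh.const_mul k).neg).mul_const ((x + mu/2)^2)
      have h2 : HasDerivAt (fun s : ℝ => lam * mu^2 * s / 4) (lam * mu^2 / 4) t := by
        simpa using ((hasDerivAt_id t).const_mul (lam * mu^2)).div_const 4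
      exact h1.add h2
    have hprod := hP.fun_mul hE.exp
    rw [hzt, hprod.deriv, hzx, iteratedDeriv_succ, iteratedDeriv_one,
      aux_xx (ch ^ (-(1:ℝ)/2)) (k * T) (lam * mu^2 * t / 4) (mu/2) x,
      hz x t, show -k * T * (x + mu/2)^2 + lam * mu^2 * t / 4
        = -(k * T) * (x + mu/2)^2 + lam * mu^2 * t / 4 from by ring]
    have hQP : ch ^ ((-(1:ℝ)/2) - 1) * sh = ch ^ (-(1:ℝ)/2) * T := by
      rw [Real.rpow_sub hchpos, Real.rpow_one, hT]
      ring
    set e := Real.exp (-(k * Real.tanh (t * a)) * (x + mu/2)^2 + lam * mu^2 * t / 4) with he_def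
    set P := ch ^ (-(1:ℝ)/2) with hP_def
    linear_combination ((-(1:ℝ)/2) * a * e) * hQP
      + ((-(1:ℝ)/2) * T * P * e + (-(k) * (1 - T^2) * (x + mu/2)^2 * P * e)) * hka
      + ((mu^2/4 + x^2 + mu * x) * P * e) * hlamk
  · intro T hT
    refine ⟨Real.exp (lam * mu^2 * T / 4), fun x t ht htT => ?_⟩
    rw [hz]
    have ha0 : 0 ≤ a := Real.sqrt_nonneg _
    have htanh_nonneg : 0 ≤ Real.tanh (t * a) := by
      rw [Real.tanh_eq_sinh_div_cosh]
      exact div_nonneg (by positivity) (Real.cosh_pos _).le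
    have hch1 : (1:ℝ) ≤ Real.cosh (t * a) := Real.one_le_cosh _
    have h1 : Real.cosh (t * a) ^ (-(1:ℝ)/2) ≤ 1 :=
      Real.rpow_le_one_of_one_le_of_nonpos hch1 (by norm_num)
    have h2 : Real.exp (-k * Real.tanh (t * a) * (x + mu/2)^2 + lam * mu^2 * t / 4)
        ≤ Real.exp (lam * mu^2 * T / 4) := by
      apply Real.exp_le_exp.mpr
      have hq : 0 ≤ (x + mu/2)^2 := sq_nonneg _
      have hmul : 0 ≤ lam * mu^2 / 4 := by positivity
      nlinarith [mul_nonneg (mul_nonneg hk0 htanh_nonneg) hq, mul_nonneg hmul (sub_nonneg.mpr htT)]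
    have hpos : 0 ≤ Real.cosh (t * a) ^ (-(1:ℝ)/2) := Real.rpow_nonneg (Real.cosh_pos _).le _
    rw [abs_of_nonneg (mul_nonneg hpos (Real.exp_nonneg _))]
    calc Real.cosh (t * a) ^ (-(1:ℝ)/2) *
          Real.exp (-k * Real.tanh (t * a) * (x + mu/2)^2 + lam * mu^2 * t / 4)
        ≤ 1 * Real.exp (lam * mu^2 * T / 4) := by
          exact mul_le_mul h1 h2 (Real.exp_nonneg _) (by norm_num)
      _ = Real.exp (lam * mu^2 * T / 4) := one_mul _
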